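/- Expanding the generalized hypergeometric operator via Stirling numbers: (∏_{j=1}^{N-1}(ϑ+b_j))∂ − ∏_{i=1}^{N}(ϑ+a_i) = Σ_{k=1}^{N} ( Σ_{j=k}^{N} ( S(j−1,k−1)·σ_{N−j}(b) − S(j,k)·σ_{N−j}(a)·x ) ) x^{k−1} ∂^k − σ_N(a), where σ_ℓ denotes the elementary symmetric polynomial of degree ℓ and S denotes Stirling numbers of the second kind. -/

import Mathlib

open PowerSeries

/-- Stirling numbers of the second kind. -/
def stirling2 : ℕ → ℕ → ℕ
  | 0, 0 => 1
  | 0, _ + 1 => 0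
  | _ + 1, 0 => 0
  | j + 1, k + 1 => (k + 1) * stirling2 j (k + 1) + stirling2 j k

/-- The elementary symmetric polynomial of degree `ℓ` in the entries of a tuple `c`
(`0` when `ℓ` exceeds the number of entries). -/
def esymmOf {n : ℕ} (c : Fin n → ℂ) (ℓ : ℕ) : ℂ :=
  ((List.ofFn c : List ℂ) : Multiset ℂ).esymm ℓ

/-- The operator `ϑ + c` where `ϑ = x·d/dx`, acting on formal power series over `ℂ`. -/
noncomputable def thetaOp (c : ℂ) (f : ℂ⟦X⟧) : ℂ⟦X⟧ :=
  X * PowerSeries.derivative ℂ f + PowerSeries.C (R := ℂ) c * f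

/-- The composition `∏_j (ϑ + c_j)` over a list of parameters. -/
noncomputable def prodOp : List ℂ → ℂ⟦X⟧ → ℂ⟦X⟧
  | [] => id
  | c :: cs => thetaOp c ∘ prodOp cs

noncomputable def ffc (x : ℂ) (k : ℕ) : ℂ := ∏ i ∈ Finset.range k, (x - i)


lemma stirling2_eq_zero {j k : ℕ} (h : j < k) : stirling2 j k = 0 := by
  induction j generalizing k with
  | zero => cases k with
    | zero => omega
    | succ k => rfl
  | succ j ih => cases k with
    | zero => omega
    | succ k => simp [stirling2, ih (show j < k+1 by omega), ih (show j < k by omega)]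

lemma stirling2_zero_right {j : ℕ} (h : 1 ≤ j) : stirling2 j 0 = 0 := by
  cases j with
  | zero => omega
  | succ j => rfl

lemma ffc_succ (x : ℂ) (k : ℕ) : ffc x (k+1) = ffc x k * (x - k) := Finset.prod_range_succ _ _

lemma stirling_sum (j : ℕ) (x : ℂ) :
    ∑ k ∈ Finset.range (j+1), (stirling2 j k : ℂ) * ffc x k = x ^ j := by
  induction j with
  | zero => simp [stirling2, ffc]
  | succ j ih =>
    rw [Finset.sum_range_succ']
    have h0 : (stirling2 (j+1) 0 : ℂ) * ffc x 0 = 0 := by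
      simp [stirling2_zero_right (show 1 ≤ j+1 by omega)]
    rw [h0, add_zero]
    have hs : ∀ k, (stirling2 (j+1) (k+1) : ℂ) = (k+1) * stirling2 j (k+1) + stirling2 j k := by
      intro k; push_cast [stirling2]; ring
    calc ∑ k ∈ Finset.range (j+1), (stirling2 (j+1) (k+1) : ℂ) * ffc x (k+1)
        = ∑ k ∈ Finset.range (j+1), (((k:ℂ)+1) * stirling2 j (k+1) * ffc x (k+1)
            + (stirling2 j k : ℂ) * ffc x k * (x - k)) := by
          refine Finset.sum_congr rfl fun k _ => ?_
          rw [hs, ffc_succ]; ring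
      _ = (∑ k ∈ Finset.range (j+1), ((k:ℂ)+1) * stirling2 j (k+1) * ffc x (k+1))
            + ∑ k ∈ Finset.range (j+1), (stirling2 j k : ℂ) * ffc x k * (x - k) := by
          rw [Finset.sum_add_distrib]
      _ = x ^ (j+1) := by
          have h1 : ∑ k ∈ Finset.range (j+1), ((k:ℂ)+1) * stirling2 j (k+1) * ffc x (k+1)
              = ∑ k ∈ Finset.range (j+1), (k:ℂ) * stirling2 j k * ffc x k := by
            have htop : ∑ k ∈ Finset.range (j+2), (k:ℂ) * stirling2 j k * ffc x k
                = ∑ k ∈ Finset.range (j+1), (k:ℂ) * stirling2 j k * ffc x k := by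
              rw [Finset.sum_range_succ, stirling2_eq_zero (show j < j+1 by omega)]
              simp
            rw [← htop, Finset.sum_range_succ' (fun k => (k:ℂ) * stirling2 j k * ffc x k) (j+1)]
            rw [Nat.cast_zero, zero_mul, zero_mul, add_zero]
            refine Finset.sum_congr rfl fun k _ => ?_
            push_cast; ring
          rw [h1]
          have h2 : ∑ k ∈ Finset.range (j+1), (stirling2 j k : ℂ) * ffc x k * (x - k)
              = x * (∑ k ∈ Finset.range (j+1), (stirling2 j k : ℂ) * ffc x k)
                - ∑ k ∈ Finset.range (j+1), (k:ℂ) * stirling2 j k * ffc x k := by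
            rw [Finset.mul_sum, ← Finset.sum_sub_distrib]
            refine Finset.sum_congr rfl fun k _ => ?_
            ring
          rw [h2, ih]; ring

lemma prod_add_eval (cs : List ℂ) (x : ℂ) :
    (cs.map fun c => x + c).prod =
      ∑ j ∈ Finset.range (cs.length + 1), (cs : Multiset ℂ).esymm j * x ^ (cs.length - j) := by
  have h := congrArg (Polynomial.eval x) (Multiset.prod_X_add_C_eq_sum_esymm (cs : Multiset ℂ))
  simp only [Polynomial.eval_multiset_prod, Multiset.map_coe, Multiset.map_map,
    Function.comp, Polynomial.eval_add, Polynomial.eval_X, Polynomial.eval_C,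
    Polynomial.eval_finset_sum, Polynomial.eval_mul, Polynomial.eval_pow,
    Multiset.coe_card, Multiset.prod_coe, Polynomial.eval_list_prod, List.map_map] at h
  rw [← h]
  simp [Function.comp_def]

lemma sum_Icc_swap (N : ℕ) (f : ℕ → ℕ → ℂ) :
    ∑ j ∈ Finset.Icc 1 N, ∑ k ∈ Finset.Icc 1 j, f j k =
    ∑ k ∈ Finset.Icc 1 N, ∑ j ∈ Finset.Icc k N, f j k := by
  rw [Finset.sum_sigma', Finset.sum_sigma']
  refine Finset.sum_nbij' (fun p => ⟨p.2, p.1⟩) (fun p => ⟨p.2, p.1⟩) ?_ ?_ ?_ ?_ ?_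
  · rintro ⟨j, k⟩ h
    simp only [Finset.mem_sigma, Finset.mem_Icc] at *
    omega
  · rintro ⟨k, j⟩ h
    simp only [Finset.mem_sigma, Finset.mem_Icc] at *
    omega
  · rintro ⟨j, k⟩ _; rfl
  · rintro ⟨k, j⟩ _; rfl
  · rintro ⟨j, k⟩ _; rfl

lemma sum_Icc_one (N : ℕ) (f : ℕ → ℂ) :
    ∑ j ∈ Finset.Icc 1 N, f j = ∑ i ∈ Finset.range N, f (1+i) := by
  rw [← Finset.Ico_add_one_right_eq_Icc, Finset.sum_Ico_eq_sum_range]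
  simp

lemma pow_eq_sum_Icc (j : ℕ) (hj : 1 ≤ j) (x : ℂ) :
    x ^ j = ∑ k ∈ Finset.Icc 1 j, (stirling2 j k : ℂ) * ffc x k := by
  rw [← stirling_sum j x, Finset.sum_range_succ' (fun k => (stirling2 j k : ℂ) * ffc x k) j,
      sum_Icc_one]
  rw [stirling2_zero_right hj]
  norm_num
  exact Finset.sum_congr rfl fun i _ => by rw [add_comm 1 i]

lemma pow_pred_eq_sum_Icc (j : ℕ) (hj : 1 ≤ j) (x : ℂ) :
    x ^ (j-1) = ∑ k ∈ Finset.Icc 1 j, (stirling2 (j-1) (k-1) : ℂ) * ffc x (k-1) := by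
  rw [← stirling_sum (j-1) x, sum_Icc_one]
  have h2 : j - 1 + 1 = j := by omega
  rw [h2]
  refine Finset.sum_congr rfl fun i _ => ?_
  simp [Nat.add_sub_cancel_left]

lemma prodA (N : ℕ) (hN : 1 ≤ N) (a : List ℂ) (ha : a.length = N) (x : ℂ) :
    (a.map fun c => x + c).prod =
      (a : Multiset ℂ).esymm N +
      ∑ k ∈ Finset.Icc 1 N, (∑ j ∈ Finset.Icc k N,
        (stirling2 j k : ℂ) * (a : Multiset ℂ).esymm (N - j)) * ffc x k := by
  set E := (a : Multiset ℂ).esymm with hE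
  rw [prod_add_eval, ha, ← Finset.sum_range_reflect]
  simp only [Nat.add_sub_cancel]
  have step1 : ∑ ℓ ∈ Finset.range (N+1), E (N - ℓ) * x ^ (N - (N - ℓ))
      = ∑ ℓ ∈ Finset.range (N+1), E (N - ℓ) * x ^ ℓ := by
    refine Finset.sum_congr rfl fun ℓ hℓ => ?_
    simp only [Finset.mem_range] at hℓ
    congr 2
    omega
  rw [step1, Finset.sum_range_succ']
  rw [Nat.sub_zero, pow_zero, mul_one, add_comm]
  congr 1
  symm
  calc ∑ k ∈ Finset.Icc 1 N, (∑ j ∈ Finset.Icc k N, (stirling2 j k : ℂ) * E (N-j)) * ffc x k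
      = ∑ k ∈ Finset.Icc 1 N, ∑ j ∈ Finset.Icc k N, E (N-j) * ((stirling2 j k : ℂ) * ffc x k) := by
        refine Finset.sum_congr rfl fun k _ => ?_
        rw [Finset.sum_mul]; exact Finset.sum_congr rfl fun j _ => by ring
    _ = ∑ j ∈ Finset.Icc 1 N, ∑ k ∈ Finset.Icc 1 j, E (N-j) * ((stirling2 j k : ℂ) * ffc x k) :=
        (sum_Icc_swap N _).symm
    _ = ∑ j ∈ Finset.Icc 1 N, E (N-j) * x ^ j := by
        refine Finset.sum_congr rfl fun j hj => ?_
        simp only [Finset.mem_Icc] at hj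
        rw [← Finset.mul_sum, ← pow_eq_sum_Icc j (by omega) x]
    _ = ∑ ℓ ∈ Finset.range N, E (N - (1+ℓ)) * x ^ (1+ℓ) := by
        rw [sum_Icc_one]
    _ = ∑ ℓ ∈ Finset.range N, E (N - (ℓ+1)) * x ^ (ℓ+1) := by
        refine Finset.sum_congr rfl fun ℓ _ => by rw [add_comm]

lemma prodB (N : ℕ) (hN : 1 ≤ N) (b : List ℂ) (hb : b.length = N - 1) (x : ℂ) :
    (b.map fun c => x + c).prod =
      ∑ k ∈ Finset.Icc 1 N, (∑ j ∈ Finset.Icc k N,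
        (stirling2 (j-1) (k-1) : ℂ) * (b : Multiset ℂ).esymm (N - j)) * ffc x (k-1) := by
  set E := (b : Multiset ℂ).esymm with hE
  have hN' : N - 1 + 1 = N := by omega
  rw [prod_add_eval, hb, hN', ← Finset.sum_range_reflect]
  have step1 : ∑ ℓ ∈ Finset.range N, E (N - 1 - ℓ) * x ^ (N - 1 - (N - 1 - ℓ))
      = ∑ ℓ ∈ Finset.range N, E (N - (1+ℓ)) * x ^ ℓ := by
    refine Finset.sum_congr rfl fun ℓ hℓ => ?_
    simp only [Finset.mem_range] at hℓ
    have e1 : N - 1 - ℓ = N - (1+ℓ) := by omega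
    have e2 : N - 1 - (N - 1 - ℓ) = ℓ := by omega
    rw [e2, e1]
  rw [step1]
  calc ∑ ℓ ∈ Finset.range N, E (N - (1+ℓ)) * x ^ ℓ
      = ∑ j ∈ Finset.Icc 1 N, E (N-j) * x ^ (j-1) := by
        rw [sum_Icc_one]
        exact Finset.sum_congr rfl fun i _ => by rw [Nat.add_sub_cancel_left]
    _ = ∑ j ∈ Finset.Icc 1 N, ∑ k ∈ Finset.Icc 1 j, E (N-j) * ((stirling2 (j-1) (k-1) : ℂ) * ffc x (k-1)) := by
        refine Finset.sum_congr rfl fun j hj => ?_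
        simp only [Finset.mem_Icc] at hj
        rw [pow_pred_eq_sum_Icc j (by omega) x, Finset.mul_sum]
    _ = ∑ k ∈ Finset.Icc 1 N, ∑ j ∈ Finset.Icc k N, E (N-j) * ((stirling2 (j-1) (k-1) : ℂ) * ffc x (k-1)) :=
        sum_Icc_swap N _
    _ = ∑ k ∈ Finset.Icc 1 N, (∑ j ∈ Finset.Icc k N, (stirling2 (j-1) (k-1) : ℂ) * E (N-j)) * ffc x (k-1) := by
        refine Finset.sum_congr rfl fun k _ => ?_
        rw [Finset.sum_mul]; exact Finset.sum_congr rfl fun j _ => by ring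
lemma coeff_thetaOp (c : ℂ) (f : ℂ⟦X⟧) (n : ℕ) :
    PowerSeries.coeff n (thetaOp c f) = ((n : ℂ) + c) * PowerSeries.coeff n f := by
  rw [thetaOp, map_add, PowerSeries.coeff_C_mul]
  cases n with
  | zero => simp
  | succ m =>
      rw [PowerSeries.coeff_succ_X_mul, PowerSeries.coeff_derivative]
      push_cast
      ring

lemma coeff_prodOp (cs : List ℂ) (f : ℂ⟦X⟧) (n : ℕ) :
    PowerSeries.coeff n (prodOp cs f) =
      ((cs.map fun c => (n:ℂ) + c).prod) * PowerSeries.coeff n f := by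
  induction cs with
  | nil => simp [prodOp]
  | cons c cs ih =>
      simp only [prodOp, Function.comp_apply, coeff_thetaOp, ih, List.map_cons, List.prod_cons]
      ring

lemma coeff_iter_deriv (k : ℕ) : ∀ (v : ℂ⟦X⟧) (n : ℕ),
    PowerSeries.coeff n ((fun g : ℂ⟦X⟧ => PowerSeries.derivative ℂ g)^[k] v) =
      (∏ i ∈ Finset.range k, ((n:ℂ) + 1 + i)) * PowerSeries.coeff (n + k) v := by
  induction k with
  | zero => intro v n; simp
  | succ k ih =>
      intro v n
      rw [Function.iterate_succ_apply, ih, PowerSeries.coeff_derivative,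
        Finset.prod_range_succ]
      have : n + (k + 1) = n + k + 1 := rfl
      rw [this]
      push_cast
      ring

lemma ffc_shift (n m : ℕ) (h : m ≤ n) :
    ∏ i ∈ Finset.range m, ((n:ℂ) - m + 1 + i) = ffc n m := by
  rw [ffc, ← Finset.prod_range_reflect]
  refine Finset.prod_congr rfl fun j hj => ?_
  simp only [Finset.mem_range] at hj
  have h1 : ((m - 1 - j : ℕ) : ℂ) = (m:ℂ) - 1 - j := by
    push_cast [Nat.cast_sub (show j ≤ m - 1 by omega), Nat.cast_sub (show 1 ≤ m by omega)]
    ring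
  rw [h1]
  ring

lemma ffc_zero (n m : ℕ) (h : n < m) : ffc n m = 0 := by
  rw [ffc]
  exact Finset.prod_eq_zero (Finset.mem_range.mpr h) (by simp)

lemma coeff_A (w : ℂ⟦X⟧) (k n : ℕ) :
    PowerSeries.coeff n (X ^ k * (fun g : ℂ⟦X⟧ => PowerSeries.derivative ℂ g)^[k] w) =
      ffc n k * PowerSeries.coeff n w := by
  rw [PowerSeries.coeff_X_pow_mul']
  split_ifs with h
  · rw [coeff_iter_deriv]
    have h2 : n - k + k = n := by omega
    rw [h2]
    congr 1
    rw [← ffc_shift n k h]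
    refine Finset.prod_congr rfl fun i _ => ?_
    rw [Nat.cast_sub h]
  · rw [ffc_zero n k (by omega), zero_mul]

lemma coeff_B (w : ℂ⟦X⟧) (k n : ℕ) (hk : 1 ≤ k) :
    PowerSeries.coeff n (X ^ (k-1) * (fun g : ℂ⟦X⟧ => PowerSeries.derivative ℂ g)^[k] w) =
      ((n:ℂ) + 1) * ffc n (k-1) * PowerSeries.coeff (n+1) w := by
  obtain ⟨m, rfl⟩ : ∃ m, k = m + 1 := ⟨k - 1, by omega⟩
  simp only [Nat.add_sub_cancel]
  rw [PowerSeries.coeff_X_pow_mul']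
  split_ifs with h
  · rw [coeff_iter_deriv]
    have h2 : n - m + (m + 1) = n + 1 := by omega
    rw [h2, Finset.prod_range_succ]
    have h3 : ∏ i ∈ Finset.range m, ((↑(n - m) : ℂ) + 1 + i) = ffc n m := by
      rw [← ffc_shift n m h]
      refine Finset.prod_congr rfl fun i _ => ?_
      rw [Nat.cast_sub h]
    rw [h3, Nat.cast_sub h]
    ring
  · rw [ffc_zero n m (by omega)]
    ring


theorem hypergeomOp_stirling_expansion (N : ℕ) (hN : 2 ≤ N)
    (a : Fin N → ℂ) (b : Fin (N - 1) → ℂ) (w : ℂ⟦X⟧) :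
    prodOp (List.ofFn b) (PowerSeries.derivative ℂ w) - prodOp (List.ofFn a) w =
      (∑ k ∈ Finset.Icc 1 N,
        (∑ j ∈ Finset.Icc k N,
          (PowerSeries.C (R := ℂ) ((stirling2 (j - 1) (k - 1) : ℂ) * esymmOf b (N - j)) -
            PowerSeries.C (R := ℂ) ((stirling2 j k : ℂ) * esymmOf a (N - j)) * X)) *
          X ^ (k - 1) * (fun g : ℂ⟦X⟧ => PowerSeries.derivative ℂ g)^[k] w) -
      PowerSeries.C (R := ℂ) (esymmOf a N) * w := by
  have hN1 : 1 ≤ N := by omega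
  ext n
  simp only [esymmOf]
  rw [map_sub, map_sub, coeff_prodOp, coeff_prodOp, PowerSeries.coeff_derivative, map_sum,
    PowerSeries.coeff_C_mul,
    prodB N hN1 (List.ofFn b) (by simp) ((n:ℂ)),
    prodA N hN1 (List.ofFn a) (by simp) ((n:ℂ))]
  have hterm : ∀ k ∈ Finset.Icc 1 N,
      PowerSeries.coeff n
        ((∑ j ∈ Finset.Icc k N,
          (PowerSeries.C (R := ℂ) ((stirling2 (j - 1) (k - 1) : ℂ) *
              ((List.ofFn b : List ℂ) : Multiset ℂ).esymm (N - j)) -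
            PowerSeries.C (R := ℂ) ((stirling2 j k : ℂ) *
              ((List.ofFn a : List ℂ) : Multiset ℂ).esymm (N - j)) * X)) *
          X ^ (k - 1) * (fun g : ℂ⟦X⟧ => PowerSeries.derivative ℂ g)^[k] w)
      = (∑ j ∈ Finset.Icc k N, (stirling2 (j - 1) (k - 1) : ℂ) *
            ((List.ofFn b : List ℂ) : Multiset ℂ).esymm (N - j)) *
          (((n:ℂ) + 1) * ffc n (k-1) * PowerSeries.coeff (n+1) w)
        - (∑ j ∈ Finset.Icc k N, (stirling2 j k : ℂ) *
            ((List.ofFn a : List ℂ) : Multiset ℂ).esymm (N - j)) *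
          (ffc n k * PowerSeries.coeff n w) := by
    intro k hk
    simp only [Finset.mem_Icc] at hk
    have hX : (X : ℂ⟦X⟧) * X ^ (k-1) = X ^ k := by
      rw [← pow_succ']
      congr 1
      omega
    have hsum : (∑ j ∈ Finset.Icc k N,
          (PowerSeries.C (R := ℂ) ((stirling2 (j - 1) (k - 1) : ℂ) *
              ((List.ofFn b : List ℂ) : Multiset ℂ).esymm (N - j)) -
            PowerSeries.C (R := ℂ) ((stirling2 j k : ℂ) *
              ((List.ofFn a : List ℂ) : Multiset ℂ).esymm (N - j)) * X))
        = PowerSeries.C (R := ℂ) (∑ j ∈ Finset.Icc k N, (stirling2 (j - 1) (k - 1) : ℂ) *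
              ((List.ofFn b : List ℂ) : Multiset ℂ).esymm (N - j))
          - PowerSeries.C (R := ℂ) (∑ j ∈ Finset.Icc k N, (stirling2 j k : ℂ) *
              ((List.ofFn a : List ℂ) : Multiset ℂ).esymm (N - j)) * X := by
      rw [Finset.sum_sub_distrib, ← Finset.sum_mul, ← map_sum, ← map_sum]
    rw [hsum]
    have hre : (PowerSeries.C (R := ℂ) (∑ j ∈ Finset.Icc k N, (stirling2 (j - 1) (k - 1) : ℂ) *
              ((List.ofFn b : List ℂ) : Multiset ℂ).esymm (N - j))
          - PowerSeries.C (R := ℂ) (∑ j ∈ Finset.Icc k N, (stirling2 j k : ℂ) *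
              ((List.ofFn a : List ℂ) : Multiset ℂ).esymm (N - j)) * X) *
          X ^ (k - 1) * (fun g : ℂ⟦X⟧ => PowerSeries.derivative ℂ g)^[k] w
        = PowerSeries.C (R := ℂ) (∑ j ∈ Finset.Icc k N, (stirling2 (j - 1) (k - 1) : ℂ) *
              ((List.ofFn b : List ℂ) : Multiset ℂ).esymm (N - j)) *
            (X ^ (k-1) * (fun g : ℂ⟦X⟧ => PowerSeries.derivative ℂ g)^[k] w)
          - PowerSeries.C (R := ℂ) (∑ j ∈ Finset.Icc k N, (stirling2 j k : ℂ) *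
              ((List.ofFn a : List ℂ) : Multiset ℂ).esymm (N - j)) *
            (X ^ k * (fun g : ℂ⟦X⟧ => PowerSeries.derivative ℂ g)^[k] w) := by
      rw [← hX]
      ring
    rw [hre, map_sub, PowerSeries.coeff_C_mul, PowerSeries.coeff_C_mul,
      coeff_A, coeff_B w k n hk.1]
  rw [Finset.sum_congr rfl hterm, Finset.sum_sub_distrib, add_mul, Finset.sum_mul,
    Finset.sum_mul]
  have e1 : ∑ k ∈ Finset.Icc 1 N,
      ((∑ j ∈ Finset.Icc k N, (stirling2 (j - 1) (k - 1) : ℂ) *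
          ((List.ofFn b : List ℂ) : Multiset ℂ).esymm (N - j)) * ffc n (k-1)) *
        (PowerSeries.coeff (n+1) w * ((n:ℂ) + 1))
      = ∑ k ∈ Finset.Icc 1 N,
      (∑ j ∈ Finset.Icc k N, (stirling2 (j - 1) (k - 1) : ℂ) *
          ((List.ofFn b : List ℂ) : Multiset ℂ).esymm (N - j)) *
        (((n:ℂ) + 1) * ffc n (k-1) * PowerSeries.coeff (n+1) w) :=
    Finset.sum_congr rfl fun k _ => by ring
  have e2 : ∑ k ∈ Finset.Icc 1 N,
      ((∑ j ∈ Finset.Icc k N, (stirling2 j k : ℂ) *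
          ((List.ofFn a : List ℂ) : Multiset ℂ).esymm (N - j)) * ffc n k) *
        PowerSeries.coeff n w
      = ∑ k ∈ Finset.Icc 1 N,
      (∑ j ∈ Finset.Icc k N, (stirling2 j k : ℂ) *
          ((List.ofFn a : List ℂ) : Multiset ℂ).esymm (N - j)) *
        (ffc n k * PowerSeries.coeff n w) :=
    Finset.sum_congr rfl fun k _ => by ring
  rw [e1, e2]
  ring
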